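/- arXiv:2510.08093 — 4 statements merged into one kernel-verified Lean document; each statement's English description precedes it below -/
import Mathlib

section
/- The rational map f: P² ⇢ P² given by [x:y:z] ↦ [x²y + y²z : xyz : x²y + xy² + 2y²z + z²(x+y)] over the complex numbers is surjective, i.e., for every point p ∈ P² with coordinates not all zero, there exists [x:y:z] not in the indeterminacy locus with f([x:y:z]) = p. -/
open Polynomial in
lemma root_quartic (c3 c2 c1 c0 : ℂ) : ∃ x : ℂ, x^4 + c3*x^3 + c2*x^2 + c1*x + c0 = 0 := by
  obtain ⟨x, hx⟩ := Complex.exists_root (f := X^4 + C c3 * X^3 + C c2 * X^2 + C c1 * X + C c0)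
    (by have h : (X^4 + C c3 * X^3 + C c2 * X^2 + C c1 * X + C c0 : ℂ[X]).degree = 4 := by
          compute_degree!
        rw [h]; norm_num)
  exact ⟨x, by simpa [Polynomial.IsRoot] using hx⟩

open Polynomial in
lemma root_cubic (c2 c1 c0 : ℂ) : ∃ x : ℂ, x^3 + c2*x^2 + c1*x + c0 = 0 := by
  obtain ⟨x, hx⟩ := Complex.exists_root (f := X^3 + C c2 * X^2 + C c1 * X + C c0)
    (by have h : (X^3 + C c2 * X^2 + C c1 * X + C c0 : ℂ[X]).degree = 3 := by
          compute_degree!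
        rw [h]; norm_num)
  exact ⟨x, by simpa [Polynomial.IsRoot] using hx⟩

open Polynomial in
lemma root_quadratic (c1 c0 : ℂ) : ∃ x : ℂ, x^2 + c1*x + c0 = 0 := by
  obtain ⟨x, hx⟩ := Complex.exists_root (f := X^2 + C c1 * X + C c0)
    (by have h : (X^2 + C c1 * X + C c0 : ℂ[X]).degree = 2 := by
          compute_degree!
        rw [h]; norm_num)
  exact ⟨x, by simpa [Polynomial.IsRoot] using hx⟩

/-- The three cubic components of the map
`[x:y:z] ↦ [x²y + y²z : xyz : x²y + xy² + 2y²z + z²(x+y)]`. -/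
noncomputable def f0 (x y z : ℂ) : ℂ := x^2*y + y^2*z
noncomputable def f1 (x y z : ℂ) : ℂ := x*y*z
noncomputable def f2 (x y z : ℂ) : ℂ := x^2*y + x*y^2 + 2*y^2*z + z^2*(x + y)

/-- Key step: a nonzero root of the relevant quartic with `a*x - b ≠ 0`
yields a preimage (taken with `y`-coordinate `a*x - b` to clear denominators). -/
lemma main_case (a b c x : ℂ) (hx : x ≠ 0) (hK : a*x - b ≠ 0)
    (hP : b^2*x^4 + (a^2+b^2-a*c)*x^3 + (a^2+b*c)*x^2 - (2*a*b+b^2)*x + b^2 = 0) :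
    ∃ X Y Z : ℂ, ∃ t : ℂ, t ≠ 0 ∧
      f0 X Y Z = t * a ∧ f1 X Y Z = t * b ∧ f2 X Y Z = t * c := by
  refine ⟨x*(a*x-b), a*x-b, x^2*b, x^3*(a*x-b)^2, ?_, ?_, ?_, ?_⟩
  · exact mul_ne_zero (pow_ne_zero 3 hx) (pow_ne_zero 2 hK)
  · unfold f0; ring
  · unfold f1; ring
  · unfold f2; linear_combination ((a*x-b)*x) * hP

/-- The cubic rational map `f = [f0 : f1 : f2] : ℙ² ⇢ ℙ²` is surjective:
every point `[a:b:c]` of `ℙ²` (coordinates not all zero) has a preimage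
`[x:y:z]` lying outside the indeterminacy locus (i.e. with `(f0,f1,f2)` not
all zero there, which is forced by the nonzero proportionality factor). -/
theorem cubic_map_surjective_quartic_case :
    ∀ a b c : ℂ, (a, b, c) ≠ (0, 0, 0) →
      ∃ x y z : ℂ, ∃ t : ℂ, t ≠ 0 ∧
        f0 x y z = t * a ∧ f1 x y z = t * b ∧ f2 x y z = t * c := by
  intro a b c h
  by_cases hb : b = 0
  · subst hb
    by_cases ha : a = 0
    · subst ha
      have hc : c ≠ 0 := by simpa [Prod.ext_iff] using h
      exact ⟨1, 0, 1, c⁻¹, inv_ne_zero hc, by unfold f0; ring, by unfold f1; ring,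
        by unfold f2; field_simp; ring⟩
    · by_cases hca : c = a
      · subst hca
        exact ⟨0, 1, -1, -c⁻¹, by simpa using inv_ne_zero ha, by unfold f0; field_simp; ring,
          by unfold f1; ring, by unfold f2; field_simp; norm_num⟩
      · exact ⟨a, c - a, 0, a*(c-a), mul_ne_zero ha (sub_ne_zero.2 hca),
          by unfold f0; ring, by unfold f1; ring, by unfold f2; ring⟩
  · by_cases hab : a + b = 0
    · have hba : b = -a := by linear_combination hab
      have ha : a ≠ 0 := fun h0 => hb (by rw [hba, h0, neg_zero])
      subst hba
      by_cases hca : c = a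
      · subst hca
        obtain ⟨x, hx⟩ := root_quadratic (-1) 1
        have hx1 : x + 1 ≠ 0 := by
          intro h1
          have : x = -1 := by linear_combination h1
          rw [this] at hx; norm_num at hx
        have hx0 : x ≠ 0 := by
          intro h0; rw [h0] at hx; norm_num at hx
        have hK : c*x - -c ≠ 0 := by
          intro hK0
          exact mul_ne_zero ha hx1 (by linear_combination hK0)
        exact main_case c (-c) c x hx0 hK (by linear_combination c^2*(x+1)^2 * hx)
      · obtain ⟨x, hx⟩ := root_cubic ((a-c)/a) 0 1
        have hQ : a*x^3 + (a-c)*x^2 + a = 0 := by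
          field_simp at hx; linear_combination hx
        have hx0 : x ≠ 0 := by
          intro h0; rw [h0] at hQ; simp at hQ; exact ha hQ
        have hx1 : x + 1 ≠ 0 := by
          intro h1
          have hac : a - c = 0 := by linear_combination hQ - (a*x^2 - c*x + c) * h1
          exact hca (by linear_combination -hac)
        have hK : a*x - -a ≠ 0 := by
          intro hK0
          exact mul_ne_zero ha hx1 (by linear_combination hK0)
        exact main_case a (-a) c x hx0 hK (by linear_combination (a*(x+1)) * hQ)
    · obtain ⟨x, hx⟩ := root_quartic ((a^2+b^2-a*c)/b^2) ((a^2+b*c)/b^2) (-(2*a*b+b^2)/b^2) 1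
      have hP : b^2*x^4 + (a^2+b^2-a*c)*x^3 + (a^2+b*c)*x^2 - (2*a*b+b^2)*x + b^2 = 0 := by
        field_simp at hx; linear_combination hx
      have hx0 : x ≠ 0 := by
        intro h0; rw [h0] at hP
        simp at hP
        exact hb hP
      have hK : a*x - b ≠ 0 := by
        intro hK0
        have h1 : b^2*x^3*(x+1) = 0 := by
          linear_combination hP - ((a-c)*x^2 + (a+b)*x - b) * hK0
        have hx1 : x + 1 = 0 := by
          rcases mul_eq_zero.1 h1 with h2 | h2
          · exact absurd h2 (mul_ne_zero (pow_ne_zero 2 hb) (pow_ne_zero 3 hx0))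
          · exact h2
        exact hab (by linear_combination -hK0 + a*hx1)
      exact main_case a b c x hx0 hK hP
end

section
/- The rational map f: P² ⇢ P² given by [x:y:z] ↦ [x²y + y²z + z²(x+y) : y²(x−z) : xyz + z²(x+y)] over the complex numbers is surjective: every point of P² has a preimage outside the indeterminacy locus. -/
/-- The three cubic components of the map
`[x:y:z] ↦ [x²y + y²z + z²(x+y) : y²(x−z) : xyz + z²(x+y)]`. -/
noncomputable def g0 (x y z : ℂ) : ℂ := x^2*y + y^2*z + z^2*(x + y)
noncomputable def g1 (x y z : ℂ) : ℂ := y^2*(x - z)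
noncomputable def g2 (x y z : ℂ) : ℂ := x*y*z + z^2*(x + y)

open Polynomial in
/-- The cubic rational map `f = [g0 : g1 : g2] : ℙ² ⇢ ℙ²` is surjective:
every point of `ℙ²` has a preimage outside the indeterminacy locus. -/
theorem cubic_map_surjective_cubic_case :
    ∀ a b c : ℂ, (a, b, c) ≠ (0, 0, 0) →
      ∃ x y z : ℂ, ∃ t : ℂ, t ≠ 0 ∧
        g0 x y z = t * a ∧ g1 x y z = t * b ∧ g2 x y z = t * c := by
  intro a b c habc
  by_cases hc : c = 0
  · subst hc
    by_cases hb : b = 0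
    · subst hb
      have ha : a ≠ 0 := by
        intro h; exact habc (by simp [h])
      refine ⟨2, -1, 2, 2/a, by simp [ha], ?_, ?_, ?_⟩
      · unfold g0; field_simp; norm_num
      · unfold g1; ring
      · unfold g2; ring
    · by_cases ha : a = 0
      · subst ha
        -- target [0:1:0]; use x = √2, y = √2 - 2, z = 1
        set r : ℂ := (Real.sqrt 2 : ℂ) with hr
        have hr2 : r ^ 2 = 2 := by
          rw [hr, ← Complex.ofReal_pow, Real.sq_sqrt (by norm_num : (0:ℝ) ≤ 2)]
          norm_num
        have hr1 : r - 1 ≠ 0 := by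
          intro h
          have : r = 1 := by linear_combination h
          rw [this] at hr2; norm_num at hr2
        have hrm2 : r - 2 ≠ 0 := by
          intro h
          have : r = 2 := by linear_combination h
          rw [this] at hr2; norm_num at hr2
        refine ⟨r, r - 2, 1, (r-2)^2*(r-1)/b, ?_, ?_, ?_, ?_⟩
        · exact div_ne_zero (mul_ne_zero (pow_ne_zero 2 hrm2) hr1) hb
        · show g0 r (r-2) 1 = _ * 0
          rw [mul_zero]; unfold g0; linear_combination (r-1) * hr2
        · unfold g1; field_simp
        · show g2 r (r-2) 1 = _ * 0
          rw [mul_zero]; unfold g2; linear_combination hr2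
      · -- c = 0, a ≠ 0, b ≠ 0 : take [x:y:z] = [a:b:0]
        refine ⟨a, b, 0, a*b, mul_ne_zero ha hb, ?_, ?_, ?_⟩
        · unfold g0; ring
        · unfold g1; ring
        · unfold g2; ring
  · by_cases hb : b = 0
    · subst hb
      -- use x = z = 1; solve c(1+y)² = a(1+2y)
      have hQ : (0:WithBot ℕ) < (C c * X^2 + C (2*(c-a)) * X + C (c-a)).degree := by
        rw [Polynomial.degree_quadratic hc]; norm_num
      obtain ⟨y, hy⟩ := Complex.exists_root hQ
      have EQ : c*y^2 + 2*(c-a)*y + (c-a) = 0 := by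
        have := hy
        simp only [IsRoot, eval_add, eval_mul, eval_pow, eval_C, eval_X] at this
        linear_combination this
      have ht : (1 + 2*y) ≠ 0 := by
        intro h
        have hy2 : y = -(1/2) := by linear_combination h/2
        rw [hy2] at EQ
        have : c = 0 := by linear_combination 4*EQ
        exact hc this
      refine ⟨1, y, 1, (1+2*y)/c, div_ne_zero ht hc, ?_, ?_, ?_⟩
      · unfold g0; field_simp; linear_combination EQ
      · unfold g1; simp
      · unfold g2; field_simp; ring
    · -- main case : b ≠ 0, c ≠ 0
      set A : ℂ := a - c with hA
      set c4 : ℂ := -(b*c) with hc4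
      set c3 : ℂ := A*b + 3*b*c with hc3
      set c2 : ℂ := A^2 - A*b - b^2 - 3*b*c with hc2
      set c1 : ℂ := -2*A^2 - 3*A*b + b*c with hc1
      set c0 : ℂ := (A+b)*(A+2*b) with hc0
      set H : Polynomial ℂ := C c0 * X^4 + C c1 * X^3 + C c2 * X^2 + C c3 * X + C c4 with hH
      have hco1 : H.coeff 1 = c3 := by
        rw [hH]
        simp [coeff_add, coeff_C_mul, coeff_X_pow, coeff_C, coeff_X]
      have hco2 : H.coeff 2 = c2 := by
        rw [hH]
        simp [coeff_add, coeff_C_mul, coeff_X_pow, coeff_C, coeff_X]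
      have hco3 : H.coeff 3 = c1 := by
        rw [hH]
        simp [coeff_add, coeff_C_mul, coeff_X_pow, coeff_C, coeff_X]
      have hdeg : (0:WithBot ℕ) < H.degree := by
        have key : H.coeff 1 ≠ 0 ∨ H.coeff 2 ≠ 0 ∨ H.coeff 3 ≠ 0 := by
          rw [hco1, hco2, hco3]
          by_cases h3 : c3 = 0
          · right
            by_cases h2 : c2 = 0
            · right
              have hAc : A = -3*c := by
                rw [hc3] at h3
                have : b * (A + 3*c) = 0 := by linear_combination h3
                rcases mul_eq_zero.mp this with h | h
                · exact absurd h hb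
                · linear_combination h
              have hb2 : b^2 = 9*c^2 := by
                rw [hc2, hAc] at h2; linear_combination -h2
              intro h1
              rw [hc1, hAc] at h1
              have hbc : 5*b = 9*c := by
                have : c * (10*b - 18*c) = 0 := by linear_combination h1
                rcases mul_eq_zero.mp this with h | h
                · exact absurd h hc
                · linear_combination h/2
              have h144 : (144:ℂ) * c^2 = 0 := by
                linear_combination -25*hb2 + (5*b+9*c)*hbc
              have hcz : c^2 = 0 := by linear_combination h144/144
              exact hc (pow_eq_zero_iff (two_ne_zero) |>.mp hcz)
            · left; exact h2
          · left; exact h3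
        rcases key with h | h | h
        · calc (0:WithBot ℕ) < 1 := by norm_num
            _ ≤ H.degree := le_degree_of_ne_zero h
        · calc (0:WithBot ℕ) < 2 := by norm_num
            _ ≤ H.degree := le_degree_of_ne_zero h
        · calc (0:WithBot ℕ) < 3 := by norm_num
            _ ≤ H.degree := le_degree_of_ne_zero h
      obtain ⟨q, hq⟩ := Complex.exists_root hdeg
      have EQ : ((a-c)+b)*((a-c)+2*b)*q^4 + (-2*(a-c)^2 - 3*(a-c)*b + b*c)*q^3
          + ((a-c)^2 - (a-c)*b - b^2 - 3*b*c)*q^2 + ((a-c)*b + 3*b*c)*q + (-(b*c)) = 0 := by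
        have h := hq
        rw [hH] at h
        simp only [IsRoot, eval_add, eval_mul, eval_pow, eval_C, eval_X] at h
        rw [hc0, hc1, hc2, hc3, hc4, hA] at h
        linear_combination h
      have hq0 : q ≠ 0 := by
        intro h
        rw [h] at EQ
        have : b * c = 0 := by linear_combination -EQ
        rcases mul_eq_zero.mp this with h' | h'
        · exact hb h'
        · exact hc h'
      have hq1 : q ≠ 1 := by
        intro h
        rw [h] at EQ
        have : b^2 = 0 := by linear_combination EQ
        exact hb (pow_eq_zero_iff (two_ne_zero) |>.mp this)
      have h1q : (1 : ℂ) - q ≠ 0 := by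
        intro h
        exact hq1 (by linear_combination -h)
      have hxne : (a - c)*(1 - q) - b*q ≠ 0 := by
        intro h
        have key : b * (c * (1-q)^3) = 0 := by
          linear_combination -EQ + (q^2*((a-c)*(1-q) - b*q) + b*q*(1-q)*(1+q))*h
        rcases mul_eq_zero.mp key with h' | h'
        · exact hb h'
        rcases mul_eq_zero.mp h' with h' | h'
        · exact hc h'
        · exact h1q (pow_eq_zero_iff (three_ne_zero) |>.mp h')
      refine ⟨(a - c)*(1 - q) - b*q, b*(1 - q), q*((a - c)*(1 - q) - b*q), ?_⟩
      set x : ℂ := (a - c)*(1 - q) - b*q with hx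
      have hg1 : g1 x (b*(1-q)) (q*x) = b^2*(1-q)^3*x := by
        unfold g1; ring
      have hg1ne : g1 x (b*(1-q)) (q*x) ≠ 0 := by
        rw [hg1]
        exact mul_ne_zero (mul_ne_zero (pow_ne_zero 2 hb) (pow_ne_zero 3 h1q)) hxne
      have key2 : c * g1 x (b*(1-q)) (q*x) = b * g2 x (b*(1-q)) (q*x) := by
        unfold g1 g2
        rw [hx]
        linear_combination (b*c - b*c*q + b^2*q - a*b + a*b*q) * EQ
      have key1 : c * g0 x (b*(1-q)) (q*x) = a * g2 x (b*(1-q)) (q*x) := by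
        unfold g0 g2
        rw [hx]
        linear_combination (-c^2 + c^2*q - b*c*q + 2*a*c - 2*a*c*q + a*b*q - a^2 + a^2*q) * EQ
      refine ⟨g1 x (b*(1-q)) (q*x) / b, div_ne_zero hg1ne hb, ?_, ?_, ?_⟩
      · have : c * (g0 x (b*(1-q)) (q*x) * b) = c * (g1 x (b*(1-q)) (q*x) * a) := by
          calc c * (g0 x (b*(1-q)) (q*x) * b) = b * (c * g0 x (b*(1-q)) (q*x)) := by ring
            _ = b * (a * g2 x (b*(1-q)) (q*x)) := by rw [key1]
            _ = a * (b * g2 x (b*(1-q)) (q*x)) := by ring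
            _ = a * (c * g1 x (b*(1-q)) (q*x)) := by rw [key2]
            _ = c * (g1 x (b*(1-q)) (q*x) * a) := by ring
        have h' := mul_left_cancel₀ hc this
        field_simp
        linear_combination h'
      · field_simp
      · field_simp
        linear_combination -key2
end

section
/- The indeterminacy locus of the map [x:y:z] ↦ [x²y + y²z : xyz : x²y + xy² + 2y²z + xz² + yz²] on the complex projective plane consists exactly of the three coordinate points [1:0:0], [0:1:0], [0:0:1]. -/
/-- The indeterminacy locus of `[x:y:z] ↦ [x²y + y²z : xyz : x²y + xy² + 2y²z + xz² + yz²]`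
on `ℙ²(ℂ)` consists exactly of the three coordinate points
`[1:0:0]`, `[0:1:0]`, `[0:0:1]`: a nonzero triple `(x,y,z)` is a common zero of the
three cubics iff it is a nonzero scalar multiple of one of `(1,0,0)`, `(0,1,0)`, `(0,0,1)`. -/
theorem indeterminacy_locus_three_points :
    ∀ x y z : ℂ, (x, y, z) ≠ (0, 0, 0) →
      ((x^2*y + y^2*z = 0 ∧ x*y*z = 0 ∧ x^2*y + x*y^2 + 2*y^2*z + x*z^2 + y*z^2 = 0) ↔
        (∃ t : ℂ, t ≠ 0 ∧ ((x, y, z) = (t, 0, 0) ∨ (x, y, z) = (0, t, 0) ∨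
          (x, y, z) = (0, 0, t)))) := by
  intro x y z h
  constructor
  · rintro ⟨h1, h2, h3⟩
    rcases mul_eq_zero.mp h2 with hxy | hz
    · rcases mul_eq_zero.mp hxy with hx | hy
      · subst hx
        have h1' : y ^ 2 * z = 0 := by linear_combination h1
        have h3' : y * z ^ 2 = 0 := by linear_combination h3 - 2 * h1
        rcases mul_eq_zero.mp h1' with hy | hz
        · have hy : y = 0 := pow_eq_zero_iff (n := 2) (by norm_num) |>.mp hy
          subst hy
          exact ⟨z, by rintro rfl; exact h rfl, Or.inr (Or.inr rfl)⟩
        · subst hz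
          exact ⟨y, by rintro rfl; exact h rfl, Or.inr (Or.inl rfl)⟩
      · subst hy
        have h3' : x * z ^ 2 = 0 := by linear_combination h3
        rcases mul_eq_zero.mp h3' with hx | hz
        · subst hx
          exact ⟨z, by rintro rfl; exact h rfl, Or.inr (Or.inr rfl)⟩
        · have hz : z = 0 := pow_eq_zero_iff (n := 2) (by norm_num) |>.mp hz
          subst hz
          exact ⟨x, by rintro rfl; exact h rfl, Or.inl rfl⟩
    · subst hz
      have h1' : x ^ 2 * y = 0 := by linear_combination h1
      have h3' : x * y ^ 2 = 0 := by linear_combination h3 - h1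
      rcases mul_eq_zero.mp h3' with hx | hy
      · subst hx
        exact ⟨y, by rintro rfl; exact h rfl, Or.inr (Or.inl rfl)⟩
      · have hy : y = 0 := pow_eq_zero_iff (n := 2) (by norm_num) |>.mp hy
        subst hy
        exact ⟨x, by rintro rfl; exact h rfl, Or.inl rfl⟩
  · rintro ⟨t, ht, h | h | h⟩ <;>
      (simp only [Prod.mk.injEq] at h; obtain ⟨hx, hy, hz⟩ := h; subst hx; subst hy; subst hz;
        refine ⟨by ring, by ring, by ring⟩)
end

section
/- For any complex numbers a, b, the system y = ax − x², x²y + xy² + 2y² + x + y = bxy has a solution with x ≠ 0. -/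
open Polynomial

/-- For any complex numbers `a, b`, the system `y = ax − x²`,
`x²y + xy² + 2y² + x + y = bxy` has a solution with `x ≠ 0`. -/
theorem preimage_system_solvable (a b : ℂ) :
    ∃ x y : ℂ, x ≠ 0 ∧ y = a*x - x^2 ∧
      x^2*y + x*y^2 + 2*y^2 + x + y = b*x*y := by
  by_cases ha : a = -1
  · by_cases hb : b = -1
    · have hdeg : (X^2 + C 3 * X + C 3 : ℂ[X]).degree = 2 := by compute_degree!
      obtain ⟨z, hz⟩ := Complex.exists_root (f := (X^2 + C 3 * X + C 3 : ℂ[X]))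
        (by rw [hdeg]; norm_num)
      simp only [IsRoot, eval_add, eval_mul, eval_pow, eval_X, eval_C] at hz
      refine ⟨z, a*z - z^2, ?_, rfl, ?_⟩
      · rintro rfl; norm_num at hz
      · subst ha; subst hb; linear_combination z^3 * hz
    · have hdeg : (X^3 + C 3 * X^2 + C (4+b) * X + C (1+b) : ℂ[X]).degree = 3 := by
        compute_degree!
      obtain ⟨z, hz⟩ := Complex.exists_root
        (f := (X^3 + C 3 * X^2 + C (4+b) * X + C (1+b) : ℂ[X])) (by rw [hdeg]; norm_num)
      simp only [IsRoot, eval_add, eval_mul, eval_pow, eval_X, eval_C] at hz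
      refine ⟨z, a*z - z^2, ?_, rfl, ?_⟩
      · rintro rfl; apply hb; norm_num at hz; linear_combination hz
      · subst ha; linear_combination z^2 * hz
  · have hdeg : (X^4 + C (1-2*a) * X^3 + C (a^2-3*a+b) * X^2 + C (2*a^2-a*b-1) * X
        + C (1+a) : ℂ[X]).degree = 4 := by compute_degree!
    obtain ⟨z, hz⟩ := Complex.exists_root
      (f := (X^4 + C (1-2*a) * X^3 + C (a^2-3*a+b) * X^2 + C (2*a^2-a*b-1) * X
        + C (1+a) : ℂ[X])) (by rw [hdeg]; norm_num)
    simp only [IsRoot, eval_add, eval_mul, eval_pow, eval_X, eval_C] at hz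
    refine ⟨z, a*z - z^2, ?_, rfl, ?_⟩
    · rintro rfl; apply ha; norm_num at hz; linear_combination hz
    · linear_combination z * hz
end
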